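/- Let η = (η₁, η₂) ∈ ℝ² be nonzero and |η| = √(η₁²+η₂²). Suppose complex numbers h_{αβ} (0 ≤ α,β ≤ 2, symmetric h_{αβ}=h_{βα}), v, σ satisfy the system: (1) |η|h₀₀ - iη₁h₁₀ - iη₂h₂₀ - ½|η|(h₀₀+h₁₁+h₂₂) = 0; (2) |η|h₀₁ - iη₁h₁₁ - iη₂h₂₁ + ½iη₁(h₀₀+h₁₁+h₂₂) = 0; (3) |η|h₀₂ - iη₁h₁₂ - iη₂h₂₂ + ½iη₂(h₀₀+h₁₁+h₂₂) = 0; (4) -2v + h₁₁ = 0; (5) h₁₂ = 0; (6) -2v + h₂₂ = 0; (7) -½|η|(h₁₁+h₂₂) - iη₁h₁₀ - iη₂h₂₀ + 2|η|v = 0; (8) -|η|σ = 0. Then h_{αβ} = 0 for all α,β, v = 0, and σ = 0. -/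
import Mathlib


/- STATEMENT 0: Nondegeneracy of the boundary symbol for the Bianchi gauge
(complementing condition in Theorem 3.1 of the paper). -/

open Complex

theorem stmt_0 (η1 η2 : ℝ) (hη : ¬(η1 = 0 ∧ η2 = 0))
    (N : ℝ) (hN : N = Real.sqrt (η1 ^ 2 + η2 ^ 2))
    (h : Fin 3 → Fin 3 → ℂ) (v σ : ℂ)
    (hsym : ∀ a b, h a b = h b a)
    (e1 : (N : ℂ) * h 0 0 - I * (η1 : ℂ) * h 1 0 - I * (η2 : ℂ) * h 2 0
        - (1 / 2 : ℂ) * (N : ℂ) * (h 0 0 + h 1 1 + h 2 2) = 0)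
    (e2 : (N : ℂ) * h 0 1 - I * (η1 : ℂ) * h 1 1 - I * (η2 : ℂ) * h 2 1
        + (1 / 2 : ℂ) * I * (η1 : ℂ) * (h 0 0 + h 1 1 + h 2 2) = 0)
    (e3 : (N : ℂ) * h 0 2 - I * (η1 : ℂ) * h 1 2 - I * (η2 : ℂ) * h 2 2
        + (1 / 2 : ℂ) * I * (η2 : ℂ) * (h 0 0 + h 1 1 + h 2 2) = 0)
    (e4 : -2 * v + h 1 1 = 0)
    (e5 : h 1 2 = 0)
    (e6 : -2 * v + h 2 2 = 0)
    (e7 : -(1 / 2 : ℂ) * (N : ℂ) * (h 1 1 + h 2 2) - I * (η1 : ℂ) * h 1 0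
        - I * (η2 : ℂ) * h 2 0 + 2 * (N : ℂ) * v = 0)
    (e8 : -(N : ℂ) * σ = 0) :
    (∀ a b, h a b = 0) ∧ v = 0 ∧ σ = 0 := by
  have hpos : 0 < η1 ^ 2 + η2 ^ 2 := by
    rcases not_and_or.mp hη with h1 | h2
    · positivity
    · positivity
  have hNpos : 0 < N := by rw [hN]; exact Real.sqrt_pos.mpr hpos
  have hNsqr : N ^ 2 = η1 ^ 2 + η2 ^ 2 := by
    rw [hN]; exact Real.sq_sqrt hpos.le
  have hNsq : (N : ℂ) ^ 2 = (η1 : ℂ) ^ 2 + (η2 : ℂ) ^ 2 := by exact_mod_cast hNsqr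
  have hNc : (N : ℂ) ≠ 0 := by exact_mod_cast hNpos.ne'
  have s1 : h 1 0 = h 0 1 := hsym 1 0
  have s2 : h 2 0 = h 0 2 := hsym 2 0
  have s3 : h 2 1 = h 1 2 := hsym 2 1
  have hA : I * (η1 : ℂ) * h 1 0 + I * (η2 : ℂ) * h 2 0 = 0 := by
    linear_combination (-1 : ℂ) * e7 - (1/2 : ℂ) * (N : ℂ) * e4 - (1/2 : ℂ) * (N : ℂ) * e6
  have h11v : h 1 1 = 2 * v := by linear_combination e4
  have h22v : h 2 2 = 2 * v := by linear_combination e6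
  have h21z : h 2 1 = 0 := s3.trans e5
  have h00c : (N : ℂ) * (h 0 0 - 4 * v) = 0 := by
    linear_combination 2 * e1 + 2 * hA + (N : ℂ) * e4 + (N : ℂ) * e6
  have h00v : h 0 0 = 4 * v := by
    rcases mul_eq_zero.mp h00c with h' | h'
    · exact absurd h' hNc
    · exact sub_eq_zero.mp h'
  have e2' : (N : ℂ) * h 0 1 + 2 * I * (η1 : ℂ) * v = 0 := by
    linear_combination e2 + I * (η2 : ℂ) * h21z + (1/2 : ℂ) * I * (η1 : ℂ) * h11v
      - (1/2 : ℂ) * I * (η1 : ℂ) * h22v - (1/2 : ℂ) * I * (η1 : ℂ) * h00v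
  have e3' : (N : ℂ) * h 0 2 + 2 * I * (η2 : ℂ) * v = 0 := by
    linear_combination e3 + I * (η1 : ℂ) * e5 + (1/2 : ℂ) * I * (η2 : ℂ) * h22v
      - (1/2 : ℂ) * I * (η2 : ℂ) * h11v - (1/2 : ℂ) * I * (η2 : ℂ) * h00v
  have hv2 : 2 * I * (N : ℂ) ^ 2 * v = 0 := by
    linear_combination (η1 : ℂ) * e2' + (η2 : ℂ) * e3' + I * (N : ℂ) * hA
      + (N : ℂ) * (η1 : ℂ) * s1 + (N : ℂ) * (η2 : ℂ) * s2 + 2 * I * v * hNsq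
      + (-(N : ℂ) * (η1 : ℂ) * h 1 0 - (N : ℂ) * (η2 : ℂ) * h 2 0) * Complex.I_sq
  have hv : v = 0 := by
    have := mul_eq_zero.mp hv2
    rcases this with h' | h'
    · exact absurd h' (by simp [hNc, I_ne_zero])
    · exact h'
  have h01z : h 0 1 = 0 := by
    have := e2'
    rw [hv] at this
    have h' : (N : ℂ) * h 0 1 = 0 := by linear_combination this
    rcases mul_eq_zero.mp h' with h'' | h''
    · exact absurd h'' hNc
    · exact h''
  have h02z : h 0 2 = 0 := by
    have := e3'
    rw [hv] at this
    have h' : (N : ℂ) * h 0 2 = 0 := by linear_combination this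
    rcases mul_eq_zero.mp h' with h'' | h''
    · exact absurd h'' hNc
    · exact h''
  have h00z : h 0 0 = 0 := by rw [h00v, hv]; ring
  have h11z : h 1 1 = 0 := by rw [h11v, hv]; ring
  have h22z : h 2 2 = 0 := by rw [h22v, hv]; ring
  have hσ : σ = 0 := by
    rcases mul_eq_zero.mp e8 with h' | h'
    · exact absurd (neg_eq_zero.mp h') hNc
    · exact h'
  have h10z : h 1 0 = 0 := s1.trans h01z
  have h20z : h 2 0 = 0 := s2.trans h02z
  refine ⟨?_, hv, hσ⟩
  intro a b
  fin_cases a <;> fin_cases b <;>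
    [exact h00z; exact h01z; exact h02z; exact h10z; exact h11z; exact e5;
     exact h20z; exact h21z; exact h22z]
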